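/- For nonnegative integers n_1, ..., n_{k+1}, the number of permutations π of [n] (where n = n_1 + ... + n_{k+1} + k + 1) whose excedance set is a subset of S = {n_1+1, n_1+n_2+2, ..., n_1+...+n_k+k} (the k positions following the blocks of sizes n_1,...,n_k) equals 1^(n_1+1) · 2^(n_2+1) · ... · (k+1)^(n_{k+1}+1). -/

import Mathlib

open Equiv Finset

lemma card_filter_swap_succ {n : ℕ} (p : Fin (n+1)) (s : Finset (Fin (n+1))) (hp : p ∈ s) :
    (univ.filter fun x : Fin n => Equiv.swap 0 p x.succ ∈ s).card = s.card - 1 := by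
  have : (univ.filter fun x : Fin n => Equiv.swap 0 p x.succ ∈ s).card = (s.erase p).card := by
    apply Finset.card_bij (fun x _ => Equiv.swap 0 p x.succ)
    · intro x hx
      simp only [mem_filter] at hx
      refine Finset.mem_erase.2 ⟨?_, hx.2⟩
      intro h
      have := (Equiv.swap 0 p).injective (a₁ := x.succ) (a₂ := 0)
      simp only [Equiv.swap_apply_left] at this
      exact (Fin.succ_ne_zero x) (this h)
    · intro a ha b hb hab
      exact Fin.succ_injective _ ((Equiv.swap 0 p).injective hab)
    · intro y hy
      rw [Finset.mem_erase] at hy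
      have hz : Equiv.swap 0 p y ≠ 0 := by
        intro h
        apply hy.1
        have := congrArg (Equiv.swap 0 p) h
        simpa using this
      obtain ⟨x, hx⟩ := Fin.exists_succ_eq.2 hz
      refine ⟨x, ?_, ?_⟩
      · simp only [mem_filter, mem_univ, true_and, hx]
        simpa using hy.2
      · rw [hx]; simp
  rw [this, Finset.card_erase_of_mem hp]

lemma nested_count : ∀ (n : ℕ) (A : Fin n → Finset (Fin n)), Monotone A →
    (∀ i : Fin n, (i : ℕ) < (A i).card) →
    Nat.card {σ : Equiv.Perm (Fin n) // ∀ i, σ i ∈ A i}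
      = ∏ i : Fin n, ((A i).card - (i : ℕ)) := by
  intro n
  induction n with
  | zero =>
    intro A _ _
    rw [Nat.card_eq_fintype_card]
    rw [show (∏ i : Fin 0, ((A i).card - (i:ℕ))) = 1 from rfl, Fintype.card_eq_one_iff]
    exact ⟨⟨1, fun i => i.elim0⟩, fun y => Subtype.ext (Equiv.ext fun i => i.elim0)⟩
  | succ n ih =>
    intro A hmono hcard
    have key : Nat.card {σ : Equiv.Perm (Fin (n+1)) // ∀ i, σ i ∈ A i}
        = Nat.card {pe : Fin (n+1) × Equiv.Perm (Fin n) //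
            pe.1 ∈ A 0 ∧ ∀ i : Fin n, Equiv.swap 0 pe.1 ((pe.2 i).succ) ∈ A i.succ} := by
      apply Nat.card_congr
      refine (Equiv.subtypeEquiv Equiv.Perm.decomposeFin.symm ?_).symm
      intro pe
      rw [Fin.forall_fin_succ]
      obtain ⟨p, e⟩ := pe
      simp [Equiv.Perm.decomposeFin_symm_apply_zero, Equiv.Perm.decomposeFin_symm_apply_succ]
    rw [key]
    have key2 : Nat.card {pe : Fin (n+1) × Equiv.Perm (Fin n) //
            pe.1 ∈ A 0 ∧ ∀ i : Fin n, Equiv.swap 0 pe.1 ((pe.2 i).succ) ∈ A i.succ}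
        = ∑ p : Fin (n+1), Nat.card {e : Equiv.Perm (Fin n) //
            p ∈ A 0 ∧ ∀ i : Fin n, Equiv.swap 0 p ((e i).succ) ∈ A i.succ} := by
      rw [Nat.card_congr (Equiv.subtypeProdEquivSigmaSubtype
        (fun p (e : Equiv.Perm (Fin n)) =>
          p ∈ A 0 ∧ ∀ i : Fin n, Equiv.swap 0 p ((e i).succ) ∈ A i.succ))]
      rw [Nat.card_eq_fintype_card, Fintype.card_sigma]
      simp [Nat.card_eq_fintype_card]
    rw [key2]
    have hval : ∀ p : Fin (n+1), Nat.card {e : Equiv.Perm (Fin n) //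
            p ∈ A 0 ∧ ∀ i : Fin n, Equiv.swap 0 p ((e i).succ) ∈ A i.succ}
        = if p ∈ A 0 then ∏ i : Fin n, ((A i.succ).card - 1 - (i:ℕ)) else 0 := by
      intro p
      by_cases hp : p ∈ A 0
      · rw [if_pos hp]
        have e1 : {e : Equiv.Perm (Fin n) //
            p ∈ A 0 ∧ ∀ i : Fin n, Equiv.swap 0 p ((e i).succ) ∈ A i.succ}
            ≃ {e : Equiv.Perm (Fin n) //
              ∀ i : Fin n, e i ∈ univ.filter fun x : Fin n => Equiv.swap 0 p x.succ ∈ A i.succ} := by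
          apply Equiv.subtypeEquiv (Equiv.refl _)
          intro e
          simp [hp]
        rw [Nat.card_congr e1]
        rw [ih _ ?_ ?_]
        · apply Finset.prod_congr rfl
          intro i _
          rw [card_filter_swap_succ p _ (hmono (Fin.zero_le _) hp)]
        · intro i j hij
          intro x hx
          simp only [mem_filter, mem_univ, true_and] at hx ⊢
          exact hmono (by exact_mod_cast Fin.succ_le_succ_iff.2 hij) hx
        · intro i
          rw [card_filter_swap_succ p _ (hmono (Fin.zero_le _) hp)]
          have := hcard i.succ
          simp only [Fin.val_succ] at this
          omega
      · rw [if_neg hp]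
        rw [Nat.card_eq_zero]
        left
        constructor
        intro e
        exact absurd e.2.1 hp
    calc ∑ p : Fin (n+1), Nat.card {e : Equiv.Perm (Fin n) //
            p ∈ A 0 ∧ ∀ i : Fin n, Equiv.swap 0 p ((e i).succ) ∈ A i.succ}
        = ∑ p : Fin (n+1), if p ∈ A 0 then ∏ i : Fin n, ((A i.succ).card - 1 - (i:ℕ)) else 0 := by
          exact Finset.sum_congr rfl fun p _ => hval p
      _ = (A 0).card * ∏ i : Fin n, ((A i.succ).card - 1 - (i:ℕ)) := by
          rw [Finset.sum_ite_mem, Finset.univ_inter, Finset.sum_const, smul_eq_mul]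
      _ = ∏ i : Fin (n+1), ((A i).card - (i:ℕ)) := by
          rw [Fin.prod_univ_succ]
          simp only [Fin.val_zero, Nat.sub_zero, Fin.val_succ]
          congr 1
          apply Finset.prod_congr rfl
          intro i _
          omega


lemma prod_count : ∀ (k : ℕ) (c : ℕ) (ns : ℕ → ℕ),
    ∏ v ∈ Finset.range ((∑ i ∈ range (k+1), ns i) + k + 1),
      (c + ((range k).filter (fun j => (∑ m ∈ range (j+1), ns m) + j < v)).card)
    = ∏ j ∈ range (k+1), (c + j) ^ (ns j + 1) := by
  intro k
  induction k with
  | zero =>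
    intro c ns
    simp [Finset.prod_const]
  | succ k ih =>
    intro c ns
    have hsum : (∑ i ∈ range (k+2), ns i) + (k+1) + 1
        = (ns 0 + 1) + ((∑ i ∈ range (k+1), ns (i+1)) + k + 1) := by
      rw [Finset.sum_range_succ' ns (k+1)]
      ring
    rw [hsum, Finset.prod_range_add]
    have h1 : ∀ v ∈ range (ns 0 + 1),
        (c + ((range (k+1)).filter (fun j => (∑ m ∈ range (j+1), ns m) + j < v)).card) = c := by
      intro v hv
      rw [mem_range] at hv
      have : (range (k+1)).filter (fun j => (∑ m ∈ range (j+1), ns m) + j < v) = ∅ := by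
        rw [Finset.filter_eq_empty_iff]
        intro j _
        have h0 : ns 0 ≤ ∑ m ∈ range (j+1), ns m :=
          Finset.single_le_sum (fun m _ => Nat.zero_le _) (Finset.mem_range.2 (Nat.succ_pos j))
        omega
      rw [this]
      simp
    rw [Finset.prod_congr rfl h1, Finset.prod_const, Finset.card_range]
    have h2 : ∀ v' : ℕ,
        ((range (k+1)).filter (fun j => (∑ m ∈ range (j+1), ns m) + j < ns 0 + 1 + v')).card
        = 1 + ((range k).filter (fun j => (∑ m ∈ range (j+1), ns (m+1)) + j < v')).card := by
      intro v'
      rw [Finset.card_filter, Finset.card_filter, Finset.sum_range_succ']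
      have e0 : (if (∑ m ∈ range (0+1), ns m) + 0 < ns 0 + 1 + v' then 1 else 0) = 1 := by
        simp only [zero_add, Finset.sum_range_one, Nat.add_zero]
        rw [if_pos (by omega)]
      rw [e0]
      rw [Nat.add_comm]
      congr 1
      apply Finset.sum_congr rfl
      intro j _
      have : (∑ m ∈ range (j+1+1), ns m) + (j+1) = ns 0 + 1 + ((∑ m ∈ range (j+1), ns (m+1)) + j) := by
        rw [Finset.sum_range_succ' ns (j+1)]
        ring
      rw [this]
      simp
    have h3 : ∀ v' ∈ range ((∑ i ∈ range (k+1), ns (i+1)) + k + 1),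
        (c + ((range (k+1)).filter
          (fun j => (∑ m ∈ range (j+1), ns m) + j < ns 0 + 1 + v')).card)
        = ((c+1) + ((range k).filter
            (fun j => (∑ m ∈ range (j+1), ns (m+1)) + j < v')).card) := by
      intro v' _
      rw [h2]
      ring
    rw [Finset.prod_congr rfl h3, ih (c+1) (fun m => ns (m+1))]
    rw [Finset.prod_range_succ' (fun j => (c + j) ^ (ns j + 1)) (k+1)]
    simp only [Nat.add_zero, pow_zero]
    rw [mul_comm]
    congr 1
    apply Finset.prod_congr rfl
    intro j _
    ring_nf

/-- Ehrenborg–Steingrimsson lemma: the number of permutations of `[n]`,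
`n = n₁ + ⋯ + n_{k+1} + k + 1`, whose excedance set is contained in the set of
`k` separator positions following the blocks of sizes `n₁,…,n_k`, equals
`1^(n₁+1) · 2^(n₂+1) ⋯ (k+1)^(n_{k+1}+1)`. -/
theorem stmt2 (k n : ℕ) (ns : ℕ → ℕ)
    (hn : n = (∑ i ∈ Finset.range (k + 1), ns i) + k + 1) :
    Nat.card {σ : Equiv.Perm (Fin n) //
        ∀ i : Fin n, (i : ℕ) < (σ i : ℕ) →
          ∃ j < k, (i : ℕ) = (∑ m ∈ Finset.range (j + 1), ns m) + j}
      = ∏ i ∈ Finset.range (k + 1), (i + 1) ^ (ns i + 1) := by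
  set s : ℕ → ℕ := fun j => (∑ m ∈ range (j+1), ns m) + j with hs
  set B : Fin n → Finset (Fin n) := fun w =>
    univ.filter (fun i : Fin n => w.rev ≤ i ∨ ∃ j < k, (i : ℕ) = s j) with hB
  -- strict monotonicity of s
  have hsmono : StrictMono s := by
    intro a b hab
    have : ∑ m ∈ range (a+1), ns m ≤ ∑ m ∈ range (b+1), ns m :=
      Finset.sum_le_sum_of_subset (Finset.range_subset_range.2 (by omega))
    simp only [hs]
    omega
  -- cardinality of B
  have hcnt : ∀ w : Fin n, (B w).card
      = (n - (w.rev : ℕ)) + ((range k).filter (fun j => s j < (w.rev : ℕ))).card := by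
    intro w
    have hsplit : B w = (univ.filter fun i : Fin n => w.rev ≤ i)
        ∪ (univ.filter fun i : Fin n => (i : ℕ) < (w.rev : ℕ) ∧ ∃ j < k, (i : ℕ) = s j) := by
      ext i
      simp only [hB, mem_filter, mem_union, mem_univ, true_and]
      constructor
      · rintro (h | h)
        · exact Or.inl h
        · rcases le_or_gt w.rev i with h' | h'
          · exact Or.inl h'
          · exact Or.inr ⟨(Fin.lt_def.1 h'), h⟩
      · rintro (h | ⟨_, h⟩)
        · exact Or.inl h
        · exact Or.inr h
    have hdisj : Disjoint (univ.filter fun i : Fin n => w.rev ≤ i)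
        (univ.filter fun i : Fin n => (i : ℕ) < (w.rev : ℕ) ∧ ∃ j < k, (i : ℕ) = s j) := by
      rw [Finset.disjoint_filter]
      intro i _ h1 h2
      rw [Fin.le_def] at h1
      omega
    rw [hsplit, Finset.card_union_of_disjoint hdisj]
    congr 1
    · have : (univ.filter fun i : Fin n => w.rev ≤ i) = Finset.Ici w.rev := by
        ext i; simp
      rw [this, Fin.card_Ici]
    · symm
      apply Finset.card_bij (fun j hj => (⟨s j, by
          simp only [mem_filter, mem_range] at hj
          have : (w.rev : ℕ) < n := w.rev.isLt
          omega⟩ : Fin n))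
      · intro j hj
        simp only [mem_filter, mem_range] at hj ⊢
        exact ⟨mem_univ _, hj.2, j, hj.1, rfl⟩
      · intro a ha b hb hab
        simp only [mem_filter, mem_range] at ha hb
        have := congrArg (fun x : Fin n => (x : ℕ)) hab
        simp only at this
        exact hsmono.injective this
      · intro i hi
        simp only [mem_filter, mem_univ, true_and] at hi
        obtain ⟨hlt, j, hjk, hij⟩ := hi
        refine ⟨j, ?_, ?_⟩
        · simp only [mem_filter, mem_range]
          exact ⟨hjk, by omega⟩
        · exact Fin.ext hij.symm
  -- monotone
  have hmono : Monotone B := by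
    intro w w' hww'
    intro i hi
    simp only [hB, mem_filter, mem_univ, true_and] at hi ⊢
    rcases hi with h | h
    · exact Or.inl (le_trans (Fin.rev_le_rev.2 hww') h)
    · exact Or.inr h
  have hcard : ∀ w : Fin n, (w : ℕ) < (B w).card := by
    intro w
    rw [hcnt w]
    have h1 : (w.rev : ℕ) = n - 1 - w := by rw [Fin.val_rev]; omega
    have h2 : (w : ℕ) < n := w.isLt
    omega
  -- the equivalence
  have hequiv : Nat.card {σ : Equiv.Perm (Fin n) //
        ∀ i : Fin n, (i : ℕ) < (σ i : ℕ) →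
          ∃ j < k, (i : ℕ) = (∑ m ∈ Finset.range (j + 1), ns m) + j}
      = Nat.card {τ : Equiv.Perm (Fin n) // ∀ w, τ w ∈ B w} := by
    apply Nat.card_congr
    apply Equiv.subtypeEquiv ((Equiv.inv (Equiv.Perm (Fin n))).trans
      (Equiv.mulRight Fin.revPerm))
    intro σ
    have he : ∀ w : Fin n,
        (((Equiv.inv (Equiv.Perm (Fin n))).trans (Equiv.mulRight Fin.revPerm)) σ) w
          = σ⁻¹ w.rev := fun w => rfl
    constructor
    · intro h w
      rw [he]
      simp only [hB, mem_filter, mem_univ, true_and]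
      rcases lt_or_ge ((σ⁻¹ w.rev : Fin n) : ℕ) ((σ (σ⁻¹ w.rev) : Fin n) : ℕ) with hl | hg
      · exact Or.inr (h _ hl)
      · left
        rw [Fin.le_def]
        have h2 : σ (σ⁻¹ w.rev) = w.rev := σ.apply_symm_apply w.rev
        rw [h2] at hg
        exact hg
    · intro h i hlt
      have h3 := h ((σ i).rev)
      rw [he, Fin.rev_rev, Equiv.Perm.inv_def, Equiv.symm_apply_apply] at h3
      simp only [hB, mem_filter, mem_univ, true_and] at h3
      rcases h3 with h' | h'
      · rw [Fin.rev_rev, Fin.le_def] at h'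
        omega
      · exact h'
  rw [hequiv, nested_count n B hmono hcard]
  have hfac : ∀ w : Fin n, (B w).card - (w : ℕ)
      = 1 + ((range k).filter (fun j => s j < (w.rev : ℕ))).card := by
    intro w
    rw [hcnt w]
    have h1 : (w.rev : ℕ) = n - 1 - w := by rw [Fin.val_rev]; omega
    have h2 : (w : ℕ) < n := w.isLt
    omega
  calc ∏ w : Fin n, ((B w).card - (w : ℕ))
      = ∏ w : Fin n, (1 + ((range k).filter (fun j => s j < (w.rev : ℕ))).card) :=
        Finset.prod_congr rfl fun w _ => hfac w
    _ = ∏ v : Fin n, (1 + ((range k).filter (fun j => s j < (v : ℕ))).card) :=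
        by exact Equiv.prod_comp Fin.revPerm (fun v : Fin n => 1 + ((range k).filter (fun j => s j < (v : ℕ))).card)
    _ = ∏ v ∈ range n, (1 + ((range k).filter (fun j => s j < v)).card) :=
        Fin.prod_univ_eq_prod_range (fun v => 1 + ((range k).filter (fun j => s j < v)).card) n
    _ = ∏ j ∈ range (k+1), (1 + j) ^ (ns j + 1) := by
        rw [hn]; exact prod_count k 1 ns
    _ = ∏ i ∈ Finset.range (k + 1), (i + 1) ^ (ns i + 1) := by
        apply Finset.prod_congr rfl
        intro j _
        rw [Nat.add_comm]
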